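/- Let k be a field with char k ≠ 2. Let A = k[u,y]/(y² − u²) and B = k[x,y]/(y² − x⁴), and let φ : A → B be the k-algebra homomorphism with φ(u) = x² and φ(y) = y (well defined since y² − x⁴ maps to 0). Then: (i) φ is injective and B is a free A-module with basis {1, x}; (ii) the unique A-algebra automorphism σ of B with σ(x) = −x has fixed subalgebra B^σ equal to the image of φ; (iii) letting e : B → A be the A-linear map with e(1) = 0 and e(x) = 1, the map B → Hom_A(B, A), b ↦ (c ↦ e(bc)), is an isomorphism of B-modules, so Hom_A(B, A) is free of rank one over B generated by e; (iv) e ∘ σ = −e. -/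

import Mathlib

open MvPolynomial

set_option synthInstance.maxHeartbeats 1000000
set_option maxHeartbeats 1000000

/-- The affine node `A = k[u,y]/(y² - u²)` (variables indexed by `Bool`: `u = X false`,
`y = X true`). -/
abbrev NodeA (k : Type) [Field k] : Type :=
  MvPolynomial Bool k ⧸ (Ideal.span {(X true ^ 2 - X false ^ 2 : MvPolynomial Bool k)})

/-- The class of `u` in `k[u,y]/(y² - u²)`. -/
noncomputable def nodeAU (k : Type) [Field k] : NodeA k :=
  Ideal.Quotient.mk _ (X false)

/-- The class of `y` in `k[u,y]/(y² - u²)`. -/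
noncomputable def nodeAY (k : Type) [Field k] : NodeA k :=
  Ideal.Quotient.mk _ (X true)

/-- The affine tac-node `B = k[x,y]/(y² - x⁴)`. -/
abbrev TacNode (k : Type) [Field k] : Type :=
  MvPolynomial (Fin 2) k ⧸ (Ideal.span {(X 1 ^ 2 - X 0 ^ 4 : MvPolynomial (Fin 2) k)})

/-- The class of `x` in `k[x,y]/(y² - x⁴)`. -/
noncomputable def tacX (k : Type) [Field k] : TacNode k :=
  Ideal.Quotient.mk _ (X 0)

/-- The class of `y` in `k[x,y]/(y² - x⁴)`. -/
noncomputable def tacY (k : Type) [Field k] : TacNode k :=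
  Ideal.Quotient.mk _ (X 1)

namespace Stmt10

variable (k : Type) [Field k]

/-- class of `u^m y^n` in A -/
noncomputable def valA (m n : ℕ) : NodeA k :=
  Ideal.Quotient.mk _ (X false ^ m * X true ^ n)

/-- class of `x^s y^t` in B -/
noncomputable def valB (s t : ℕ) : TacNode k :=
  Ideal.Quotient.mk _ (X 0 ^ s * X 1 ^ t)

lemma valA_eq (m n : ℕ) : valA k m n = nodeAU k ^ m * nodeAY k ^ n := by
  simp [valA, nodeAU, nodeAY, map_mul, map_pow]

lemma valB_eq (s t : ℕ) : valB k s t = tacX k ^ s * tacY k ^ t := by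
  simp [valB, tacX, tacY, map_mul, map_pow]

lemma valA_mul (m n m' n' : ℕ) : valA k m n * valA k m' n' = valA k (m + m') (n + n') := by
  simp [valA_eq, pow_add]; ring

lemma valA_zero_zero : valA k 0 0 = 1 := by simp [valA]

lemma nodeA_rel : nodeAY k ^ 2 = nodeAU k ^ 2 := by
  have h : Ideal.Quotient.mk (Ideal.span {(X true ^ 2 - X false ^ 2 : MvPolynomial Bool k)})
      ((X true ^ 2 - X false ^ 2 : MvPolynomial Bool k)) = 0 := by
    rw [Ideal.Quotient.eq_zero_iff_mem]
    exact Ideal.subset_span rfl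
  rw [map_sub] at h
  have h2 := sub_eq_zero.mp h
  simpa [nodeAU, nodeAY, map_pow] using h2

lemma valA_succ2 (m n : ℕ) : valA k m (n + 2) = valA k (m + 2) n := by
  have h : valA k m (n+2) = valA k m n * nodeAY k ^ 2 := by
    rw [valA_eq, valA_eq, pow_add]; ring
  rw [h, nodeA_rel]
  rw [valA_eq, valA_eq, pow_add]; ring

/-- the target of the splitting map, on a monomial exponent -/
noncomputable def tgt (d : Fin 2 →₀ ℕ) : Fin 2 → NodeA k :=
  if Even (d 0) then ![valA k (d 0 / 2) (d 1), 0] else ![0, valA k (d 0 / 2) (d 1)]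

/-- the splitting map on polynomials -/
noncomputable def D : MvPolynomial (Fin 2) k →ₗ[k] (Fin 2 → NodeA k) :=
  (MvPolynomial.basisMonomials (Fin 2) k).constr k (tgt k)

lemma D_monomial (d : Fin 2 →₀ ℕ) (c : k) : D k (monomial d c) = c • tgt k d := by
  have h1 : (monomial d c : MvPolynomial (Fin 2) k) = c • monomial d 1 := by
    rw [smul_monomial, smul_eq_mul, mul_one]
  rw [h1, map_smul]
  congr 1
  have := Module.Basis.constr_basis (MvPolynomial.basisMonomials (Fin 2) k) k (tgt k) d
  rwa [coe_basisMonomials] at this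

lemma tgt_add_single1 (d : Fin 2 →₀ ℕ) :
    tgt k (d + Finsupp.single 1 2) = tgt k (d + Finsupp.single 0 4) := by
  have h0 : (d + Finsupp.single 1 2 : Fin 2 →₀ ℕ) 0 = d 0 := by
    simp [Finsupp.single_apply]
  have h1 : (d + Finsupp.single 1 2 : Fin 2 →₀ ℕ) 1 = d 1 + 2 := by
    simp [Finsupp.single_apply]
  have h0' : (d + Finsupp.single 0 4 : Fin 2 →₀ ℕ) 0 = d 0 + 4 := by
    simp [Finsupp.single_apply]
  have h1' : (d + Finsupp.single 0 4 : Fin 2 →₀ ℕ) 1 = d 1 := by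
    simp [Finsupp.single_apply]
  have hev : Even (d 0 + 4) ↔ Even (d 0) := by simp [Nat.even_add, (by decide : Even 4)]
  have hdiv : (d 0 + 4) / 2 = d 0 / 2 + 2 := by omega
  have hval : valA k (d 0 / 2) (d 1 + 2) = valA k ((d 0 + 4) / 2) (d 1) := by
    rw [hdiv]; exact valA_succ2 k _ _
  simp only [tgt, h0, h1, h0', h1', hev, hval]

lemma D_g_mul (q : MvPolynomial (Fin 2) k) :
    D k ((X 1 ^ 2 - X 0 ^ 4) * q) = 0 := by
  induction q using MvPolynomial.induction_on' with
  | add p q hp hq => rw [mul_add, map_add, hp, hq, add_zero]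
  | monomial d c =>
    have h1 : (X 1 ^ 2 - X 0 ^ 4 : MvPolynomial (Fin 2) k) * monomial d c
        = monomial (d + Finsupp.single 1 2) c - monomial (d + Finsupp.single 0 4) c := by
      rw [mul_comm, mul_sub, X_pow_eq_monomial, X_pow_eq_monomial, monomial_mul, monomial_mul, mul_one]
    rw [h1, map_sub, D_monomial, D_monomial, tgt_add_single1, sub_self]

lemma D_ker (p : MvPolynomial (Fin 2) k)
    (hp : p ∈ Ideal.span {(X 1 ^ 2 - X 0 ^ 4 : MvPolynomial (Fin 2) k)}) :
    D k p = 0 := by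
  obtain ⟨q, rfl⟩ := Ideal.mem_span_singleton.mp hp
  exact D_g_mul k q

/-- the splitting map on `B` -/
noncomputable def Dfun : TacNode k → (Fin 2 → NodeA k) :=
  fun b => Quotient.liftOn' b (D k) (fun p q h => by
    have h' : p - q ∈ Ideal.span {(X 1 ^ 2 - X 0 ^ 4 : MvPolynomial (Fin 2) k)} :=
      (Submodule.quotientRel_def _).mp h
    have h2 := D_ker k _ h'
    rw [map_sub] at h2
    exact sub_eq_zero.mp h2)

lemma Dfun_mk (p : MvPolynomial (Fin 2) k) :
    Dfun k (Ideal.Quotient.mk _ p) = D k p := rfl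

lemma Dfun_add (b c : TacNode k) : Dfun k (b + c) = Dfun k b + Dfun k c := by
  obtain ⟨p, rfl⟩ := Ideal.Quotient.mk_surjective b
  obtain ⟨q, rfl⟩ := Ideal.Quotient.mk_surjective c
  rw [← map_add, Dfun_mk, Dfun_mk, Dfun_mk, map_add]

lemma Dfun_valB (s t : ℕ) :
    Dfun k (valB k s t) =
      if Even s then ![valA k (s / 2) t, 0] else ![0, valA k (s / 2) t] := by
  have h1 : (X 0 ^ s * X 1 ^ t : MvPolynomial (Fin 2) k)
      = monomial (Finsupp.single 0 s + Finsupp.single 1 t) 1 := by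
    rw [X_pow_eq_monomial, X_pow_eq_monomial, monomial_mul, one_mul]
  have h0 : (Finsupp.single 0 s + Finsupp.single 1 t : Fin 2 →₀ ℕ) 0 = s := by
    simp [Finsupp.single_apply]
  have h1' : (Finsupp.single 0 s + Finsupp.single 1 t : Fin 2 →₀ ℕ) 1 = t := by
    simp [Finsupp.single_apply]
  rw [valB, h1, Dfun_mk, D_monomial, one_smul, tgt, h0, h1']

lemma mon_bool (d : Bool →₀ ℕ) :
    (monomial d (1:k) : MvPolynomial Bool k) = X false ^ d false * X true ^ d true := by
  have hd : d = Finsupp.single false (d false) + Finsupp.single true (d true) := by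
    ext b; cases b <;> simp [Finsupp.single_apply]
  rw [X_pow_eq_monomial, X_pow_eq_monomial, monomial_mul, one_mul, ← hd]

lemma mon_fin2 (d : Fin 2 →₀ ℕ) :
    (monomial d (1:k) : MvPolynomial (Fin 2) k) = X 0 ^ d 0 * X 1 ^ d 1 := by
  have hd : d = Finsupp.single 0 (d 0) + Finsupp.single 1 (d 1) := by
    ext i; fin_cases i <;> simp [Finsupp.single_apply]
  rw [X_pow_eq_monomial, X_pow_eq_monomial, monomial_mul, one_mul, ← hd]

lemma mkA_monomial (d : Bool →₀ ℕ) (c : k) :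
    (Ideal.Quotient.mk (Ideal.span {(X true ^ 2 - X false ^ 2 : MvPolynomial Bool k)})
      (monomial d c) : NodeA k) = c • valA k (d false) (d true) := by
  have h1 : (monomial d c : MvPolynomial Bool k) = c • monomial d 1 := by
    rw [smul_monomial, smul_eq_mul, mul_one]
  rw [h1, mon_bool, ← Ideal.Quotient.mkₐ_eq_mk (R₁ := k), map_smul, valA,
    Ideal.Quotient.mkₐ_eq_mk]

lemma mkB_monomial (d : Fin 2 →₀ ℕ) (c : k) :
    (Ideal.Quotient.mk (Ideal.span {(X 1 ^ 2 - X 0 ^ 4 : MvPolynomial (Fin 2) k)})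
      (monomial d c) : TacNode k) = c • valB k (d 0) (d 1) := by
  have h1 : (monomial d c : MvPolynomial (Fin 2) k) = c • monomial d 1 := by
    rw [smul_monomial, smul_eq_mul, mul_one]
  rw [h1, mon_fin2, ← Ideal.Quotient.mkₐ_eq_mk (R₁ := k), map_smul, valB,
    Ideal.Quotient.mkₐ_eq_mk]

lemma mkB_ksmul (c : k) (p : MvPolynomial (Fin 2) k) :
    (Ideal.Quotient.mk (Ideal.span {(X 1 ^ 2 - X 0 ^ 4 : MvPolynomial (Fin 2) k)})
      (c • p) : TacNode k)
      = c • Ideal.Quotient.mk _ p := by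
  rw [← Ideal.Quotient.mkₐ_eq_mk (R₁ := k), map_smul, Ideal.Quotient.mkₐ_eq_mk]

lemma Dfun_ksmul (c : k) (b : TacNode k) : Dfun k (c • b) = c • Dfun k b := by
  obtain ⟨p, rfl⟩ := Ideal.Quotient.mk_surjective b
  rw [← mkB_ksmul, Dfun_mk, Dfun_mk, map_smul]

lemma valB_mul (s t s' t' : ℕ) : valB k s t * valB k s' t' = valB k (s + s') (t + t') := by
  simp [valB_eq, pow_add]; ring

section Alg

variable [Algebra (NodeA k) (TacNode k)] [IsScalarTower k (NodeA k) (TacNode k)]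
variable (hu : algebraMap (NodeA k) (TacNode k) (nodeAU k) = tacX k ^ 2)
variable (hy : algebraMap (NodeA k) (TacNode k) (nodeAY k) = tacY k)
include hu hy

lemma amap_valA (m n : ℕ) :
    algebraMap (NodeA k) (TacNode k) (valA k m n) = valB k (2 * m) n := by
  rw [valA_eq, map_mul, map_pow, map_pow, hu, hy, valB_eq, ← pow_mul]

lemma key0 (m n s t : ℕ) :
    Dfun k (valA k m n • valB k s t) = valA k m n • Dfun k (valB k s t) := by
  rw [Algebra.smul_def, amap_valA k hu hy, valB_mul, Dfun_valB, Dfun_valB]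
  by_cases h : Even s
  · obtain ⟨r, rfl⟩ := h
    have he : Even (2 * m + (r + r)) := ⟨m + r, by ring⟩
    rw [if_pos he, if_pos ⟨r, rfl⟩]
    have h1 : (2 * m + (r + r)) / 2 = m + r := by omega
    have h2 : (r + r) / 2 = r := by omega
    rw [h1, h2]
    simp [Matrix.smul_cons, Matrix.smul_empty, smul_eq_mul, smul_zero, valA_mul]
  · obtain ⟨r, rfl⟩ := Nat.not_even_iff_odd.mp h
    have he : ¬ Even (2 * m + (2 * r + 1)) := by rintro ⟨j, hj⟩; omega
    rw [if_neg he, if_neg (by rintro ⟨j, hj⟩; omega)]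
    have h1 : (2 * m + (2 * r + 1)) / 2 = m + r := by omega
    have h2 : (2 * r + 1) / 2 = r := by omega
    rw [h1, h2]
    simp [Matrix.smul_cons, Matrix.smul_empty, smul_eq_mul, smul_zero, valA_mul]

lemma Dfun_mul (a : NodeA k) (b : TacNode k) :
    Dfun k (algebraMap (NodeA k) (TacNode k) a * b) = a • Dfun k b := by
  obtain ⟨p, rfl⟩ := Ideal.Quotient.mk_surjective a
  obtain ⟨q, rfl⟩ := Ideal.Quotient.mk_surjective b
  induction p using MvPolynomial.induction_on' with
  | add p p' hp hp' => simp only [map_add, add_mul, Dfun_add, hp, hp', add_smul]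
  | monomial d c =>
    induction q using MvPolynomial.induction_on' with
    | add q q' hq hq' => simp only [map_add, mul_add, Dfun_add, hq, hq', smul_add]
    | monomial d' c' =>
      rw [mkA_monomial, mkB_monomial]
      have hmapsmul : ∀ (c : k) (a : NodeA k),
          algebraMap (NodeA k) (TacNode k) (c • a)
            = c • algebraMap (NodeA k) (TacNode k) a := by
        intro c a
        rw [Algebra.smul_def c a, map_mul, ← IsScalarTower.algebraMap_apply, ← Algebra.smul_def]
      rw [hmapsmul, smul_mul_assoc, mul_smul_comm, Dfun_ksmul, Dfun_ksmul,
        ← Algebra.smul_def, key0 k hu hy, Dfun_ksmul, smul_assoc,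
        smul_comm c' (valA k (d false) (d true))]

lemma Dfun_smul (a : NodeA k) (b : TacNode k) :
    Dfun k (a • b) = a • Dfun k b := by
  rw [Algebra.smul_def]
  exact Dfun_mul k hu hy a b

/-- the inverse map: `(a₀, a₁) ↦ a₀ + a₁ x` -/
noncomputable def G : (Fin 2 → NodeA k) →ₗ[NodeA k] TacNode k :=
  (LinearMap.proj 0).smulRight 1 + (LinearMap.proj 1).smulRight (tacX k)

omit hu hy in
lemma G_apply (v : Fin 2 → NodeA k) :
    G k v = algebraMap (NodeA k) (TacNode k) (v 0)
      + algebraMap (NodeA k) (TacNode k) (v 1) * tacX k := by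
  show v 0 • (1 : TacNode k) + v 1 • tacX k = _
  rw [Algebra.smul_def, Algebra.smul_def, mul_one]

omit hu hy in
lemma Dfun_one : Dfun k (1 : TacNode k) = ![1, 0] := by
  have h : (1 : TacNode k) = valB k 0 0 := by simp [valB_eq]
  rw [h, Dfun_valB]
  norm_num [valA_zero_zero]

omit hu hy in
lemma Dfun_tacX : Dfun k (tacX k) = ![0, 1] := by
  have h : tacX k = valB k 1 0 := by simp [valB_eq]
  rw [h, Dfun_valB]
  norm_num [valA_zero_zero]

lemma G_Dfun_valB (s t : ℕ) : G k (Dfun k (valB k s t)) = valB k s t := by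
  rw [Dfun_valB]
  by_cases h : Even s
  · obtain ⟨r, rfl⟩ := h
    rw [if_pos ⟨r, rfl⟩, G_apply]
    simp only [Matrix.cons_val_zero, Matrix.cons_val_one, Matrix.head_cons, map_zero, zero_mul,
      add_zero]
    rw [amap_valA k hu hy]
    congr 1
    omega
  · obtain ⟨r, rfl⟩ := Nat.not_even_iff_odd.mp h
    rw [if_neg (by rintro ⟨j, hj⟩; omega), G_apply]
    simp only [Matrix.cons_val_zero, Matrix.cons_val_one, Matrix.head_cons, map_zero, zero_add]
    rw [amap_valA k hu hy]
    have hx : tacX k = valB k 1 0 := by simp [valB_eq]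
    rw [hx, valB_mul]
    congr 1
    omega

lemma G_Dfun (b : TacNode k) : G k (Dfun k b) = b := by
  obtain ⟨p, rfl⟩ := Ideal.Quotient.mk_surjective b
  induction p using MvPolynomial.induction_on' with
  | add p p' hp hp' => rw [map_add, Dfun_add, map_add, hp, hp']
  | monomial d c =>
    rw [mkB_monomial, Dfun_ksmul, LinearMap.map_smul_of_tower]
    congr 1
    exact G_Dfun_valB k hu hy _ _

lemma coeffs (a0 a1 : NodeA k) :
    Dfun k (algebraMap (NodeA k) (TacNode k) a0
      + algebraMap (NodeA k) (TacNode k) a1 * tacX k) = ![a0, a1] := by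
  have h0 : algebraMap (NodeA k) (TacNode k) a0
      = algebraMap (NodeA k) (TacNode k) a0 * 1 := (mul_one _).symm
  rw [Dfun_add, h0, Dfun_mul k hu hy, Dfun_mul k hu hy, Dfun_one, Dfun_tacX]
  funext i
  fin_cases i <;>
    simp [Matrix.smul_cons, Matrix.smul_empty, smul_eq_mul]

lemma Dfun_G (v : Fin 2 → NodeA k) : Dfun k (G k v) = v := by
  rw [G_apply, coeffs k hu hy]
  funext i
  fin_cases i <;> simp

lemma decomp (b : TacNode k) :
    b = algebraMap (NodeA k) (TacNode k) (Dfun k b 0)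
      + algebraMap (NodeA k) (TacNode k) (Dfun k b 1) * tacX k := by
  conv_lhs => rw [← G_Dfun k hu hy b]
  rw [G_apply]

/-- the `A`-linear splitting map -/
noncomputable def DA : TacNode k →ₗ[NodeA k] (Fin 2 → NodeA k) where
  toFun := Dfun k
  map_add' := Dfun_add k
  map_smul' := fun a b => Dfun_smul k hu hy a b

/-- the `A`-module equivalence `B ≃ A²` -/
noncomputable def EAB : TacNode k ≃ₗ[NodeA k] (Fin 2 → NodeA k) :=
  LinearEquiv.ofLinear (DA k hu hy) (G k)
    (LinearMap.ext (Dfun_G k hu hy))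
    (LinearMap.ext (G_Dfun k hu hy))

/-- the basis `{1, x}` of `B` over `A` -/
noncomputable def basB : Module.Basis (Fin 2) (NodeA k) (TacNode k) :=
  Module.Basis.ofEquivFun (EAB k hu hy)

lemma basB_zero : basB k hu hy 0 = 1 := by
  have h : basB k hu hy 0 = (EAB k hu hy).symm (Pi.single (0 : Fin 2) (1 : NodeA k)) := by
    rw [basB, Module.Basis.coe_ofEquivFun]
  rw [h]
  show G k (Pi.single (0 : Fin 2) (1 : NodeA k)) = 1
  rw [G_apply, Pi.single_eq_same, Pi.single_eq_of_ne (by decide)]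
  simp

lemma basB_one : basB k hu hy 1 = tacX k := by
  have h : basB k hu hy 1 = (EAB k hu hy).symm (Pi.single (1 : Fin 2) (1 : NodeA k)) := by
    rw [basB, Module.Basis.coe_ofEquivFun]
  rw [h]
  show G k (Pi.single (1 : Fin 2) (1 : NodeA k)) = tacX k
  rw [G_apply, Pi.single_eq_same, Pi.single_eq_of_ne (by decide)]
  simp

omit hu hy in
lemma f_amap_mul (f : TacNode k →ₗ[NodeA k] NodeA k) (a : NodeA k) (z : TacNode k) :
    f (algebraMap (NodeA k) (TacNode k) a * z) = a * f z := by
  calc f (algebraMap (NodeA k) (TacNode k) a * z)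
      = f (a • z) := by rw [Algebra.smul_def]
    _ = a • f z := map_smul f a z
    _ = a * f z := rfl

lemma f_decomp (f : TacNode k →ₗ[NodeA k] NodeA k) (b : TacNode k) :
    f b = Dfun k b 0 * f 1 + Dfun k b 1 * f (tacX k) := by
  conv_lhs => rw [decomp k hu hy b]
  have h0 : algebraMap (NodeA k) (TacNode k) (Dfun k b 0)
      = algebraMap (NodeA k) (TacNode k) (Dfun k b 0) * 1 := (mul_one _).symm
  rw [h0, map_add, f_amap_mul, f_amap_mul]

lemma lin_ext (f g : TacNode k →ₗ[NodeA k] NodeA k)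
    (h1 : f 1 = g 1) (hx : f (tacX k) = g (tacX k)) : f = g :=
  LinearMap.ext fun b => by rw [f_decomp k hu hy f b, f_decomp k hu hy g b, h1, hx]

lemma Dfun_mul_tacX (b : TacNode k) :
    Dfun k (b * tacX k) = ![nodeAU k * Dfun k b 1, Dfun k b 0] := by
  have hh : b * tacX k
      = algebraMap (NodeA k) (TacNode k) (nodeAU k * Dfun k b 1)
        + algebraMap (NodeA k) (TacNode k) (Dfun k b 0) * tacX k := by
    conv_lhs => rw [decomp k hu hy b]
    rw [map_mul, hu]
    ring
  rw [hh, coeffs k hu hy]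

end Alg

end Stmt10

open Stmt10

/-- Let `k` be a field with `char k ≠ 2`, `A = k[u,y]/(y² - u²)`,
`B = k[x,y]/(y² - x⁴)`, and `φ : A → B` the `k`-algebra homomorphism with `φ u = x²`,
`φ y = y` (encoded as an algebra structure).  Then:
(i) `φ` is injective and `B` is a free `A`-module with basis `{1, x}`;
(ii) the unique `A`-algebra automorphism `σ` of `B` with `σ x = -x` has fixed subalgebra the
image of `φ`;
(iii) letting `e : B → A` be the `A`-linear map with `e 1 = 0` and `e x = 1`, the map
`Θ : B → Hom_A(B, A)`, `b ↦ (c ↦ e (b * c))`, is an isomorphism of `B`-modules (with the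
`B`-module structure `(b • f) c = f (b * c)` on the target), so `Hom_A(B, A)` is free of rank
one over `B`, generated by `e = Θ 1`;
(iv) `e ∘ σ = -e`. -/
theorem stmt10 (k : Type) [Field k] (h2 : (2 : k) ≠ 0)
    [Algebra (NodeA k) (TacNode k)] [IsScalarTower k (NodeA k) (TacNode k)]
    (hu : algebraMap (NodeA k) (TacNode k) (nodeAU k) = tacX k ^ 2)
    (hy : algebraMap (NodeA k) (TacNode k) (nodeAY k) = tacY k)
    (σ : TacNode k ≃ₐ[NodeA k] TacNode k) (hσ : σ (tacX k) = - tacX k)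
    (e : TacNode k →ₗ[NodeA k] NodeA k) (he1 : e 1 = 0) (hex : e (tacX k) = 1)
    (Θ : TacNode k → (TacNode k →ₗ[NodeA k] NodeA k))
    (hΘ : ∀ b c, Θ b c = e (b * c)) :
    -- (i)
    Function.Injective (algebraMap (NodeA k) (TacNode k)) ∧
    (∃ bas : Module.Basis (Fin 2) (NodeA k) (TacNode k), bas 0 = 1 ∧ bas 1 = tacX k) ∧
    -- (ii)
    (∀ σ' : TacNode k ≃ₐ[NodeA k] TacNode k, σ' (tacX k) = - tacX k → σ' = σ) ∧
    ({b : TacNode k | σ b = b} = Set.range (algebraMap (NodeA k) (TacNode k))) ∧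
    -- (iii)
    (∀ b b', Θ (b + b') = Θ b + Θ b') ∧
    (∀ b b' c, Θ (b' * b) c = Θ b (b' * c)) ∧
    Function.Bijective Θ ∧
    Θ 1 = e ∧
    -- (iv)
    (∀ b, e (σ b) = - e b) := by
  have hdec := decomp k hu hy
  have hco := coeffs k hu hy
  have he_val : ∀ b, e b = Dfun k b 1 := by
    intro b
    rw [f_decomp k hu hy e b, he1, hex, mul_zero, mul_one, zero_add]
  have hmulx : ∀ b, e (b * tacX k) = Dfun k b 0 := by
    intro b
    rw [he_val, Dfun_mul_tacX k hu hy]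
    simp
  have hamap : ∀ a : NodeA k,
      Dfun k (algebraMap (NodeA k) (TacNode k) a) = ![a, 0] := by
    intro a
    have h2' : algebraMap (NodeA k) (TacNode k) a
        = algebraMap (NodeA k) (TacNode k) a
          + algebraMap (NodeA k) (TacNode k) (0 : NodeA k) * tacX k := by
      rw [map_zero, zero_mul, add_zero]
    rw [h2', hco]
  have hσfix : ∀ b, σ b = algebraMap (NodeA k) (TacNode k) (Dfun k b 0)
      + algebraMap (NodeA k) (TacNode k) (-(Dfun k b 1)) * tacX k := by
    intro b
    conv_lhs => rw [hdec b]
    rw [map_add, map_mul, AlgEquiv.commutes, AlgEquiv.commutes, hσ, map_neg]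
    ring
  refine ⟨?_, ⟨basB k hu hy, basB_zero k hu hy, basB_one k hu hy⟩, ?_, ?_, ?_, ?_, ⟨?_, ?_⟩,
    ?_, ?_⟩
  · -- injectivity
    intro a a' h
    have h3 : (![a, (0:NodeA k)] : Fin 2 → NodeA k) 0 = ![a', (0:NodeA k)] 0 := by
      rw [← hamap a, ← hamap a', h]
    simpa using h3
  · -- uniqueness of σ'
    intro σ' hσ'
    refine AlgEquiv.ext fun b => ?_
    conv_lhs => rw [hdec b]
    conv_rhs => rw [hdec b]
    rw [map_add, map_add, map_mul, map_mul, AlgEquiv.commutes, AlgEquiv.commutes,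
      AlgEquiv.commutes, AlgEquiv.commutes, hσ', hσ]
  · -- fixed points
    ext b
    simp only [Set.mem_setOf_eq, Set.mem_range]
    constructor
    · intro hb
      have hqq : Dfun k (σ b) = ![Dfun k b 0, -(Dfun k b 1)] := by rw [hσfix b, hco]
      rw [hb] at hqq
      have h1 : Dfun k b 1 = -(Dfun k b 1) := by
        have h5 := congrFun hqq 1
        simpa using h5
      have hsum : Dfun k b 1 + Dfun k b 1 = 0 := add_eq_zero_iff_eq_neg.mpr h1
      have hz : Dfun k b 1 = 0 := by
        have h4 : Dfun k b 1 = (2:k)⁻¹ • ((2:k) • Dfun k b 1) := (inv_smul_smul₀ h2 _).symm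
        have h2s : (2:k) • Dfun k b 1 = Dfun k b 1 + Dfun k b 1 := two_smul k _
        rw [h4, h2s, hsum, smul_zero]
      refine ⟨Dfun k b 0, ?_⟩
      conv_rhs => rw [hdec b]
      rw [hz, map_zero, zero_mul, add_zero]
    · rintro ⟨a, rfl⟩
      exact σ.commutes a
  · -- additivity of Θ
    intro b b'
    refine LinearMap.ext fun c => ?_
    rw [LinearMap.add_apply, hΘ, hΘ, hΘ, add_mul, map_add]
  · -- B-module semilinearity of Θ
    intro b b' c
    rw [hΘ, hΘ, show (b' * b) * c = b * (b' * c) by ring]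
  · -- injectivity of Θ
    intro b b' h
    have h1v : ∀ c, e (b * c) = e (b' * c) := fun c => by rw [← hΘ b c, ← hΘ b' c, h]
    have c1 : Dfun k b 1 = Dfun k b' 1 := by
      have h5 := h1v 1
      rw [mul_one, mul_one, he_val, he_val] at h5
      exact h5
    have c0 : Dfun k b 0 = Dfun k b' 0 := by
      have h5 := h1v (tacX k)
      rw [hmulx, hmulx] at h5
      exact h5
    calc b = _ := hdec b
      _ = algebraMap (NodeA k) (TacNode k) (Dfun k b' 0)
          + algebraMap (NodeA k) (TacNode k) (Dfun k b' 1) * tacX k := by rw [c0, c1]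
      _ = b' := (hdec b').symm
  · -- surjectivity of Θ
    intro f
    refine ⟨algebraMap (NodeA k) (TacNode k) (f (tacX k))
      + algebraMap (NodeA k) (TacNode k) (f 1) * tacX k, ?_⟩
    have hb0 := hco (f (tacX k)) (f 1)
    refine lin_ext k hu hy _ f ?_ ?_
    · rw [hΘ, mul_one, he_val, hb0]
      simp
    · rw [hΘ, hmulx, hb0]
      simp
  · -- Θ 1 = e
    refine LinearMap.ext fun c => ?_
    rw [hΘ, one_mul]
  · -- (iv)
    intro b
    rw [he_val (σ b), hσfix b, hco, he_val b]
    simp
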